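/- Let a > 0 and m < 0 be real constants. For β ∈ ℝ, let y_β : [−1, 1] → ℝ be a C¹ solution of dy/dx = (a/(2|m|))·(1 + sin(y))·(β·sin(πx) − a·sec(y)·tan(y)) with y_β(−1) = 0. Then there exists ε > 0 such that for all β with 0 < β < ε, one has y_β(1) > 0. -/

import Mathlib

set_option maxHeartbeats 1000000
open Real

lemma aux_cos_pos {u : ℝ} (hu : |u| ≤ 1/2) : 0 < Real.cos u := by
  apply Real.cos_pos_of_mem_Ioo
  obtain ⟨h1, h2⟩ := abs_le.1 hu
  constructor <;> nlinarith [Real.pi_gt_three]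

lemma aux_sin_le {u : ℝ} (hu : |u| ≤ 1/2) : Real.sin u ≤ 1/2 :=
  le_trans (le_trans (le_abs_self _) Real.abs_sin_le_abs) hu

lemma aux_denom {u : ℝ} (hu : |u| ≤ 1/2) : (1:ℝ)/2 ≤ 1 - Real.sin u := by
  have := aux_sin_le hu; linarith

lemma aux_rewrite {u : ℝ} (hu : |u| ≤ 1/2) :
    (1 + Real.sin u) * ((1:ℝ)/Real.cos u) * Real.tan u = Real.sin u / (1 - Real.sin u) := by
  have hc : Real.cos u ≠ 0 := (aux_cos_pos hu).ne'
  have hs : 1 - Real.sin u ≠ 0 := by have := aux_denom hu; linarith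
  have hpyth : Real.cos u ^ 2 = 1 - Real.sin u ^ 2 := by
    have := Real.sin_sq_add_cos_sq u; linarith
  rw [Real.tan_eq_sin_div_cos]
  field_simp
  linear_combination (-1 : ℝ) * Real.sin u * hpyth

lemma aux_bound1 {u : ℝ} (hu : |u| ≤ 1/2) : |Real.sin u / (1 - Real.sin u)| ≤ 2 * |u| := by
  have h2 := aux_denom hu
  rw [abs_div, abs_of_pos (by linarith : (0:ℝ) < 1 - Real.sin u)]
  rw [div_le_iff₀ (by linarith)]
  have h3 : |u| ≤ 2 * |u| * (1 - Real.sin u) := by nlinarith [abs_nonneg u]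
  have h4 : |Real.sin u| ≤ |u| := Real.abs_sin_le_abs
  linarith

lemma aux_sub_sin {u : ℝ} (hu : |u| ≤ 1/2) : |u - Real.sin u| ≤ u^2 := by
  rcases lt_trichotomy u 0 with h | h | h
  · have h1 : 0 < -u := by linarith
    have h2 : -u ≤ 1 := by have := abs_le.1 hu; linarith
    have := Real.sin_gt_sub_cube h1
    rw [Real.sin_neg] at this
    have h3 := Real.le_sin h.le
    rw [abs_le]; constructor <;> nlinarith
  · simp [h]
  · have h2 : u ≤ 1 := by have := abs_le.1 hu; linarith
    have := Real.sin_gt_sub_cube h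
    have h3 := Real.sin_le h.le
    rw [abs_le]; constructor <;> nlinarith

lemma aux_bound2 {u : ℝ} (hu : |u| ≤ 1/2) :
    |u - Real.sin u / (1 - Real.sin u)| ≤ 4 * u^2 := by
  have h2 := aux_denom hu
  have hs : (1:ℝ) - Real.sin u ≠ 0 := by linarith
  have key : u - Real.sin u / (1 - Real.sin u) = (u - Real.sin u - u * Real.sin u) / (1 - Real.sin u) := by
    field_simp; ring
  rw [key, abs_div, abs_of_pos (by linarith : (0:ℝ) < 1 - Real.sin u), div_le_iff₀ (by linarith)]
  have h3 := aux_sub_sin hu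
  have h4 : |u * Real.sin u| ≤ u^2 := by
    rw [abs_mul]
    calc |u| * |Real.sin u| ≤ |u| * |u| := by
          exact mul_le_mul_of_nonneg_left Real.abs_sin_le_abs (abs_nonneg u)
      _ = u^2 := by rw [← abs_mul, ← sq, abs_sq]
  calc |u - Real.sin u - u * Real.sin u| ≤ |u - Real.sin u| + |u * Real.sin u| := abs_sub _ _
    _ ≤ u^2 + u^2 := by linarith
    _ ≤ 4 * u^2 * (1 - Real.sin u) := by nlinarith [sq_nonneg u]

/-- antiderivative for exp(k x) sin (π x) -/
lemma aux_antideriv (k : ℝ) (hk : 0 < k) (x : ℝ) :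
    HasDerivAt (fun x : ℝ => (Real.exp (k*x) * (k * Real.sin (π*x) - π * Real.cos (π*x))) / (k^2 + π^2))
      (Real.exp (k*x) * Real.sin (π*x)) x := by
  have he : HasDerivAt (fun x : ℝ => Real.exp (k*x)) (Real.exp (k*x) * k) x := by
    simpa using ((hasDerivAt_id x).const_mul k).exp
  have hsin : HasDerivAt (fun x : ℝ => Real.sin (π*x)) (Real.cos (π*x) * π) x := by
    simpa using ((hasDerivAt_id x).const_mul π).sin
  have hcos : HasDerivAt (fun x : ℝ => Real.cos (π*x)) (-Real.sin (π*x) * π) x := by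
    simpa using ((hasDerivAt_id x).const_mul π).cos
  have hin : HasDerivAt (fun x : ℝ => k * Real.sin (π*x) - π * Real.cos (π*x))
      (k * (Real.cos (π*x) * π) - π * (-Real.sin (π*x) * π)) x :=
    ((hsin.const_mul k).sub (hcos.const_mul π))
  have hmul := he.mul hin
  have := hmul.div_const (k^2 + π^2)
  refine this.congr_deriv ?_
  have hd : k^2 + π^2 ≠ 0 := by positivity
  field_simp
  ring

theorem backward_flow_positive_at_one
    (a m : ℝ) (ha : 0 < a) (hm : m < 0) :
    ∃ ε > (0 : ℝ), ∀ β : ℝ, 0 < β → β < ε →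
      ∀ y : ℝ → ℝ,
        y (-1) = 0 →
        (∀ x ∈ Set.Icc (-1 : ℝ) 1,
          HasDerivAt y
            ((a / (2 * |m|)) * (1 + sin (y x)) *
              (β * sin (π * x) - a * (1 / cos (y x)) * tan (y x))) x) →
        y 1 > 0 := by
  have hm' : (0:ℝ) < |m| := abs_pos.2 hm.ne
  set c : ℝ := a / (2 * |m|) with hc_def
  have hc : 0 < c := by positivity
  set k : ℝ := a * c with hk_def
  have hk : 0 < k := by positivity
  clear_value c k
  set M : ℝ := (c/k) * (Real.exp (4*k) - 1) with hM_def
  have hM : 0 < M := by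
    apply mul_pos (by positivity)
    have : (1:ℝ) < Real.exp (4*k) := by
      rw [← Real.exp_zero]; exact Real.exp_lt_exp.2 (by positivity)
    linarith
  set K₅ : ℝ := c * M + 4 * k * M^2 with hK5_def
  have hK5 : 0 < K₅ := by positivity
  clear_value M
  clear_value K₅
  set L : ℝ := c * π * (Real.exp k - Real.exp (-k)) / (k^2 + π^2) with hL_def
  have hL : 0 < L := by
    apply div_pos _ (by positivity)
    apply mul_pos (by positivity)
    have : Real.exp (-k) < Real.exp k := Real.exp_lt_exp.2 (by linarith)
    linarith
  clear_value L
  refine ⟨min ((1/4)/(M+1)) (L/(2*Real.exp k*K₅+1)), lt_min (by positivity) (by positivity),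
    fun β hβ hβε y h0 hy' => ?_⟩
  have hβ1 : β < (1/4)/(M+1) := lt_of_lt_of_le hβε (min_le_left _ _)
  have hβ2 : β < L/(2*Real.exp k*K₅+1) := lt_of_lt_of_le hβε (min_le_right _ _)
  have hMβ : M * β < 1/4 := by
    rw [lt_div_iff₀ (by positivity)] at hβ1
    nlinarith
  -- continuity of y on Icc
  have hcont : ∀ x ∈ Set.Icc (-1:ℝ) 1, ContinuousAt y x := fun x hx => (hy' x hx).continuousAt
  have hcontOn : ContinuousOn y (Set.Icc (-1:ℝ) 1) :=
    fun x hx => (hcont x hx).continuousWithinAt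
  -- the derivative expression
  set d : ℝ → ℝ := fun x => c * (1 + sin (y x)) * (β * sin (π * x) - a * (1 / cos (y x)) * tan (y x)) with hd_def
  -- rewrite of derivative when |y x| ≤ 1/2
  have hrw : ∀ x : ℝ, |y x| ≤ 1/2 →
      d x = c * β * (1 + Real.sin (y x)) * Real.sin (π*x)
        - k * (Real.sin (y x) / (1 - Real.sin (y x))) := by
    intro x hx
    have := aux_rewrite hx
    simp only [hd_def, hk_def]
    linear_combination (-(a*c)) * this
  -- pointwise bound
  have hdbd : ∀ x : ℝ, |y x| ≤ 1/2 → |d x| ≤ 2*k * |y x| + 2*c*β := by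
    intro x hx
    rw [hrw x hx]
    have h1 : |c * β * (1 + Real.sin (y x)) * Real.sin (π*x)| ≤ 2*c*β := by
      rw [abs_mul, abs_mul, abs_mul]
      have hs1 : |1 + Real.sin (y x)| ≤ 2 := by
        rw [abs_le]; constructor
        · nlinarith [Real.neg_one_le_sin (y x)]
        · nlinarith [Real.sin_le_one (y x)]
      have hs2 : |Real.sin (π*x)| ≤ 1 := Real.abs_sin_le_one _
      have : |c| = c := abs_of_pos hc
      have hb : |β| = β := abs_of_pos hβ
      rw [this, hb]
      have hmm : |1 + Real.sin (y x)| * |Real.sin (π*x)| ≤ 2 := by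
        nlinarith [abs_nonneg (1 + Real.sin (y x)), abs_nonneg (Real.sin (π*x))]
      calc c * β * |1 + Real.sin (y x)| * |Real.sin (π*x)|
          = (c*β) * (|1 + Real.sin (y x)| * |Real.sin (π*x)|) := by ring
        _ ≤ (c*β) * 2 := mul_le_mul_of_nonneg_left hmm (le_of_lt (mul_pos hc hβ))
        _ = 2*c*β := by ring
    have h2 : |k * (Real.sin (y x) / (1 - Real.sin (y x)))| ≤ 2*k*|y x| := by
      rw [abs_mul, abs_of_pos hk]
      have := aux_bound1 hx
      nlinarith
    calc |_ - _| ≤ |c * β * (1 + Real.sin (y x)) * Real.sin (π*x)| + |k * (Real.sin (y x) / (1 - Real.sin (y x)))| := abs_sub _ _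
      _ ≤ 2*c*β + 2*k*|y x| := by linarith
      _ = 2*k * |y x| + 2*c*β := by ring
  -- Gronwall: on any initial segment where |y| ≤ 1/2, we get |y| ≤ M β
  have hGron : ∀ t, t ∈ Set.Icc (-1:ℝ) 1 → (∀ s ∈ Set.Icc (-1:ℝ) t, |y s| ≤ 1/2) →
      ∀ x ∈ Set.Icc (-1:ℝ) t, |y x| ≤ M * β := by
    intro t ht hhalf x hx
    have key := norm_le_gronwallBound_of_norm_deriv_right_le (f := y) (f' := d)
      (δ := 0) (K := 2*k) (ε := 2*c*β) (a := -1) (b := t)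
      (hcontOn.mono (Set.Icc_subset_Icc le_rfl ht.2))
      (fun s hs => (hy' s ⟨hs.1, le_trans hs.2.le ht.2⟩).hasDerivWithinAt)
      (by simp [h0])
      (fun s hs => by
        have := hdbd s (hhalf s ⟨hs.1, hs.2.le⟩)
        simpa [Real.norm_eq_abs] using this)
      x hx
    rw [Real.norm_eq_abs] at key
    refine le_trans key ?_
    rw [gronwallBound_of_K_ne_0 (by positivity : (2*k) ≠ 0)]
    simp only [zero_mul, zero_add]
    have hquot : 2*c*β/(2*k) = (c/k)*β := by field_simp
    rw [hquot]
    have hexp : Real.exp (2*k*(x - -1)) ≤ Real.exp (4*k) := by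
      apply Real.exp_le_exp.2
      nlinarith [hx.2, ht.2]
    have h1 : Real.exp (2*k*(x - -1)) - 1 ≤ Real.exp (4*k) - 1 := by linarith
    calc (c/k)*β * (Real.exp (2*k*(x - -1)) - 1) ≤ (c/k)*β * (Real.exp (4*k) - 1) := by
          apply mul_le_mul_of_nonneg_left h1 (by positivity)
      _ = M * β := by rw [hM_def]; ring
  -- bootstrap: |y| ≤ 1/2 on all of Icc (-1) 1
  have hhalf : ∀ s ∈ Set.Icc (-1:ℝ) 1, |y s| ≤ 1/2 := by
    set A : Set ℝ := {t | t ∈ Set.Icc (-1:ℝ) 1 ∧ ∀ s ∈ Set.Icc (-1:ℝ) t, |y s| ≤ 1/2} with hA_def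
    have hA0 : (-1:ℝ) ∈ A := by
      refine ⟨⟨le_refl _, by norm_num⟩, fun s hs => ?_⟩
      have : s = -1 := le_antisymm hs.2 hs.1
      rw [this, h0]; norm_num
    have hAne : A.Nonempty := ⟨-1, hA0⟩
    have hAbdd : BddAbove A := ⟨1, fun t ht => ht.1.2⟩
    have hT1 : (-1:ℝ) ≤ sSup A := le_csSup hAbdd hA0
    have hT2 : sSup A ≤ 1 := csSup_le hAne (fun t ht => ht.1.2)
    have hPIco : ∀ s, -1 ≤ s → s < sSup A → |y s| ≤ 1/2 := by
      intro s hs1 hs2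
      obtain ⟨t, htA, hst⟩ := exists_lt_of_lt_csSup hAne hs2
      exact htA.2 s ⟨hs1, hst.le⟩
    have hyT : |y (sSup A)| ≤ 1/2 := by
      rcases eq_or_lt_of_le hT1 with h | h
      · rw [← h, h0]; norm_num
      · have hcT : ContinuousAt y (sSup A) := hcont _ ⟨hT1, hT2⟩
        have htend : Filter.Tendsto (fun s => |y s|) (nhdsWithin (sSup A) (Set.Iio (sSup A)))
            (nhds (|y (sSup A)|)) :=
          (hcT.tendsto.abs).mono_left nhdsWithin_le_nhds
        have hev : ∀ᶠ s in nhdsWithin (sSup A) (Set.Iio (sSup A)), |y s| ≤ 1/2 := by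
          filter_upwards [Ioo_mem_nhdsLT_of_mem (⟨h, le_refl (sSup A)⟩ : sSup A ∈ Set.Ioc (-1) (sSup A))] with s hs
          exact hPIco s hs.1.le hs.2
        exact le_of_tendsto htend hev
    have hTA : sSup A ∈ A := by
      refine ⟨⟨hT1, hT2⟩, fun s hs => ?_⟩
      rcases lt_or_eq_of_le hs.2 with h | h
      · exact hPIco s hs.1 h
      · rw [h]; exact hyT
    have hTeq : sSup A = 1 := by
      by_contra hne
      have hTlt : sSup A < 1 := lt_of_le_of_ne hT2 hne
      have hyTs : |y (sSup A)| ≤ M * β := hGron (sSup A) ⟨hT1, hT2⟩ hTA.2 (sSup A) ⟨hT1, le_refl _⟩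
      have hcT : ContinuousAt y (sSup A) := hcont _ ⟨hT1, hT2⟩
      obtain ⟨δ, hδ, hball⟩ := Metric.continuousAt_iff.1 hcT (1/8) (by norm_num)
      have hTt' : sSup A < min (sSup A + δ/2) 1 := lt_min (by linarith) hTlt
      have ht'A : min (sSup A + δ/2) 1 ∈ A := by
        refine ⟨⟨by linarith, min_le_right _ _⟩, fun s hs => ?_⟩
        rcases le_or_gt s (sSup A) with h | h
        · exact hTA.2 s ⟨hs.1, h⟩
        · have hds : dist s (sSup A) < δ := by
            rw [Real.dist_eq, abs_of_pos (by linarith : (0:ℝ) < s - sSup A)]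
            have : s ≤ sSup A + δ/2 := le_trans hs.2 (min_le_left _ _)
            linarith
          have hb := hball hds
          rw [Real.dist_eq] at hb
          have h8 : |y s| ≤ |y (sSup A)| + 1/8 := by
            have := abs_sub_abs_le_abs_sub (y s) (y (sSup A))
            linarith
          have hq : M*β ≤ 1/4 := hMβ.le
          linarith
      have := le_csSup hAbdd ht'A
      linarith
    intro s hs
    exact hTA.2 s ⟨hs.1, by rw [hTeq]; exact hs.2⟩
  have hMbd : ∀ x ∈ Set.Icc (-1:ℝ) 1, |y x| ≤ M * β :=
    hGron 1 ⟨by norm_num, le_refl _⟩ hhalf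
  -- integrating factor: v x = exp(k x) * y x
  set w : ℝ → ℝ := fun x => Real.exp (k*x) * (c*β*(1 + Real.sin (y x))*Real.sin (π*x)
      - k*(Real.sin (y x)/(1 - Real.sin (y x))) + k * y x) with hw_def
  have hv' : ∀ x ∈ Set.Icc (-1:ℝ) 1, HasDerivAt (fun x => Real.exp (k*x) * y x) (w x) x := by
    intro x hx
    have he : HasDerivAt (fun x : ℝ => Real.exp (k*x)) (Real.exp (k*x) * k) x := by
      simpa using ((hasDerivAt_id x).const_mul k).exp
    have hyd : HasDerivAt y (d x) x := hy' x hx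
    have hprod := he.mul hyd
    refine hprod.congr_deriv ?_
    rw [hw_def]
    simp only
    rw [hrw x (hhalf x hx)]
    ring
  have syc : ContinuousOn (fun x => Real.sin (y x)) (Set.Icc (-1:ℝ) 1) :=
    Real.continuous_sin.comp_continuousOn hcontOn
  have hterm : ContinuousOn (fun x => Real.sin (y x)/(1 - Real.sin (y x))) (Set.Icc (-1:ℝ) 1) := by
    apply syc.div (continuousOn_const.sub syc)
    intro x hx
    have h1 := aux_denom (hhalf x hx); intro hcontra; simp only [Pi.sub_apply] at hcontra; rw [hcontra] at h1; norm_num at h1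
  have hexpc : Continuous (fun x : ℝ => Real.exp (k*x)) :=
    Real.continuous_exp.comp (continuous_const.mul continuous_id)
  have hsinpi : Continuous (fun x : ℝ => Real.sin (π*x)) :=
    Real.continuous_sin.comp (continuous_const.mul continuous_id)
  have hwcont : ContinuousOn w (Set.Icc (-1:ℝ) 1) := by
    rw [hw_def]
    apply (hexpc.continuousOn).mul
    exact (((continuousOn_const.mul (continuousOn_const.add syc)).mul
      hsinpi.continuousOn).sub (continuousOn_const.mul hterm)).add
      (continuousOn_const.mul hcontOn)
  have huIcc : Set.uIcc (-1:ℝ) 1 = Set.Icc (-1:ℝ) 1 := Set.uIcc_of_le (by norm_num)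
  have hintw : IntervalIntegrable w MeasureTheory.volume (-1) 1 :=
    (huIcc ▸ hwcont : ContinuousOn w (Set.uIcc (-1:ℝ) 1)).intervalIntegrable
  have hFTC : ∫ x in (-1:ℝ)..1, w x
      = Real.exp (k*1) * y 1 - Real.exp (k*(-1)) * y (-1) :=
    intervalIntegral.integral_eq_sub_of_hasDerivAt (fun x hx => hv' x (huIcc ▸ hx)) hintw
  -- split w into main part and remainder r
  set r : ℝ → ℝ := fun x => Real.exp (k*x) * (c*β*Real.sin (y x)*Real.sin (π*x)
      + k*(y x - Real.sin (y x)/(1 - Real.sin (y x)))) with hr_def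
  have hsplit : ∀ x : ℝ, w x = c*β*(Real.exp (k*x)*Real.sin (π*x)) + r x := by
    intro x; rw [hw_def, hr_def]; simp only; ring
  have hrcont : ContinuousOn r (Set.Icc (-1:ℝ) 1) := by
    rw [hr_def]
    apply (hexpc.continuousOn).mul
    exact ((continuousOn_const.mul syc).mul hsinpi.continuousOn).add
      (continuousOn_const.mul (hcontOn.sub hterm))
  have hintr : IntervalIntegrable r MeasureTheory.volume (-1) 1 :=
    (huIcc ▸ hrcont : ContinuousOn r (Set.uIcc (-1:ℝ) 1)).intervalIntegrable
  have hinte : IntervalIntegrable (fun x => Real.exp (k*x)*Real.sin (π*x))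
      MeasureTheory.volume (-1) 1 := (hexpc.mul hsinpi).intervalIntegrable _ _
  have hI0 : ∫ x in (-1:ℝ)..1, Real.exp (k*x)*Real.sin (π*x)
      = π*(Real.exp k - Real.exp (-k))/(k^2+π^2) := by
    rw [intervalIntegral.integral_eq_sub_of_hasDerivAt (fun x _ => aux_antideriv k hk x) hinte]
    rw [show (π*(1:ℝ)) = π by ring, show (π*(-1:ℝ)) = -π by ring,
      show (k*(1:ℝ)) = k by ring, show (k*(-1:ℝ)) = -k by ring]
    rw [Real.sin_pi, Real.cos_pi, Real.sin_neg, Real.cos_neg, Real.sin_pi, Real.cos_pi]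
    ring
  have hsplitint : ∫ x in (-1:ℝ)..1, w x
      = c*β*(∫ x in (-1:ℝ)..1, Real.exp (k*x)*Real.sin (π*x)) + ∫ x in (-1:ℝ)..1, r x := by
    rw [← intervalIntegral.integral_const_mul, ← intervalIntegral.integral_add
      (hinte.const_mul (c*β)) hintr]
    apply intervalIntegral.integral_congr
    intro x _
    exact hsplit x
  -- bound the remainder
  have hrbd : ∀ x ∈ Set.Icc (-1:ℝ) 1, |r x| ≤ Real.exp k * (K₅ * β^2) := by
    intro x hx
    have hy2 := hhalf x hx
    have hyM := hMbd x hx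
    rw [hr_def]
    simp only
    rw [abs_mul, Real.abs_exp]
    have hexple : Real.exp (k*x) ≤ Real.exp k := by
      apply Real.exp_le_exp.2
      nlinarith [hx.2]
    have hin : |c*β*Real.sin (y x)*Real.sin (π*x) + k*(y x - Real.sin (y x)/(1 - Real.sin (y x)))|
        ≤ K₅ * β^2 := by
      have h1 : |c*β*Real.sin (y x)*Real.sin (π*x)| ≤ c*β*(M*β) := by
        rw [abs_mul, abs_mul, abs_mul, abs_of_pos hc, abs_of_pos hβ]
        have hs1 : |Real.sin (y x)| ≤ M*β := le_trans Real.abs_sin_le_abs hyM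
        have hs2 : |Real.sin (π*x)| ≤ 1 := Real.abs_sin_le_one _
        have hcβ : 0 ≤ c*β := (mul_pos hc hβ).le
        calc c*β*|Real.sin (y x)| * |Real.sin (π*x)| ≤ c*β*|Real.sin (y x)| * 1 := by
              apply mul_le_mul_of_nonneg_left hs2
              positivity
          _ = c*β*|Real.sin (y x)| := by ring
          _ ≤ c*β*(M*β) := by nlinarith
      have h2 : |k*(y x - Real.sin (y x)/(1 - Real.sin (y x)))| ≤ k*(4*(M*β)^2) := by
        rw [abs_mul, abs_of_pos hk]
        have := aux_bound2 hy2
        have hsq : (y x)^2 ≤ (M*β)^2 := by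
          nlinarith [sq_abs (y x), abs_nonneg (y x), hyM]
        nlinarith
      calc |_ + _| ≤ |c*β*Real.sin (y x)*Real.sin (π*x)|
            + |k*(y x - Real.sin (y x)/(1 - Real.sin (y x)))| := abs_add_le _ _
        _ ≤ c*β*(M*β) + k*(4*(M*β)^2) := by linarith
        _ = K₅ * β^2 := by rw [hK5_def]; ring
    exact mul_le_mul hexple hin (abs_nonneg _) (Real.exp_pos _).le
  have hrint_bd : |∫ x in (-1:ℝ)..1, r x| ≤ Real.exp k * (K₅ * β^2) * 2 := by
    have := intervalIntegral.norm_integral_le_of_norm_le_const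
      (C := Real.exp k * (K₅ * β^2)) (f := r) (a := (-1:ℝ)) (b := 1)
      (fun x hx => by
        have hx' : x ∈ Set.Icc (-1:ℝ) 1 := Set.uIoc_subset_uIcc.trans huIcc.subset hx
        simpa [Real.norm_eq_abs] using hrbd x hx')
    rw [Real.norm_eq_abs] at this
    calc |∫ x in (-1:ℝ)..1, r x| ≤ Real.exp k * (K₅ * β^2) * |1 - (-1)| := this
      _ = Real.exp k * (K₅ * β^2) * 2 := by norm_num
  -- final assembly
  have hfinal : Real.exp k * y 1 = β * L + ∫ x in (-1:ℝ)..1, r x := by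
    have h1 : Real.exp (k*1) * y 1 - Real.exp (k*(-1)) * y (-1) = Real.exp k * y 1 := by
      rw [h0]; ring_nf
    rw [← h1, ← hFTC, hsplitint, hI0, hL_def]
    ring
  have hpos : 0 < Real.exp k * y 1 := by
    rw [hfinal]
    have h2 : β*(2*Real.exp k*K₅+1) < L := by
      rw [lt_div_iff₀ (by positivity)] at hβ2
      linarith
    nlinarith [hrint_bd, abs_le.1 hrint_bd, Real.exp_pos k, hβ, hK5, mul_pos hβ hK5]
  nlinarith [Real.exp_pos k, hpos]
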